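/- arXiv:2107.10885 — 3 statements merged into one kernel-verified Lean document; each statement's English description precedes it below -/
import Mathlib

section
/- Suppose ∇g_n(θ̂_n) = 0, every eigenvalue of −g_n''(θ) lies in [η₁ n, η₂ n] for all θ with ‖θ−θ̂_n‖₂ ≤ δ, and p(n) ≤ A n^α with α < 1. Then there exists N ∈ ℕ, depending only on η₁, η₂, δ, A, α, such that for all n ≥ N: det(−g_n''(θ̂_n))^{1/2} (2π)^{−p/2} ∫_{γ_n < ‖θ−θ̂_n‖₂ ≤ δ} exp(g_n(θ) − g_n(θ̂_n)) dθ ≤ n^{−η₁ p/4}. -/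
open MeasureTheory Real Filter Matrix

noncomputable section

/-- Euclidean space `ℝ^p` with the `ℓ²` norm. -/
abbrev E (p : ℕ) := EuclideanSpace ℝ (Fin p)

/-- View a plain function `Fin p → ℝ` as a point of `ℝ^p` (they are definitionally equal). -/
def toE {p : ℕ} (v : Fin p → ℝ) : E p := WithLp.toLp 2 v

/-- The `j`-th standard basis vector of `ℝ^p`. -/
def bvec {p : ℕ} (j : Fin p) : E p := EuclideanSpace.single j 1

/-- The partial derivative `∂^k f / ∂θ_{v 0} ⋯ ∂θ_{v (k-1)}` of `f : ℝ^p → ℝ` at `x`. -/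
def pd {p : ℕ} (k : ℕ) (f : E p → ℝ) (x : E p) (v : Fin k → Fin p) : ℝ :=
  iteratedFDeriv ℝ k f x (fun i => bvec (v i))

/-- The Hessian matrix of `f : ℝ^p → ℝ` at `x`. -/
def hess {p : ℕ} (f : E p → ℝ) (x : E p) : Matrix (Fin p) (Fin p) ℝ :=
  Matrix.of fun j k => pd 2 f x ![j, k]

/-- `M` is symmetric with all eigenvalues in the interval `[a, b]`. -/
def eigsIn {p : ℕ} (M : Matrix (Fin p) (Fin p) ℝ) (a b : ℝ) : Prop :=
  ∃ hM : M.IsHermitian, ∀ i, a ≤ hM.eigenvalues i ∧ hM.eigenvalues i ≤ b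

/-- Maximum absolute row sum norm `‖M‖_∞` of a matrix. -/
def maxRowSum {p : ℕ} (M : Matrix (Fin p) (Fin p) ℝ) : ℝ :=
  ⨆ j, ∑ k, |M j k|

/-- `‖M^{-1/2}‖_∞ ≤ bd`: any positive semidefinite square root `R` of `M` has
`maxRowSum R⁻¹ ≤ bd`. -/
def invSqrtRowSumBound {p : ℕ} (M : Matrix (Fin p) (Fin p) ℝ) (bd : ℝ) : Prop :=
  ∀ R : Matrix (Fin p) (Fin p) ℝ, R.PosSemidef → R * R = M → maxRowSum R⁻¹ ≤ bd

/-- `γ_n = (p log n / n)^{1/2}`. -/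
def gam (p n : ℕ) : ℝ := Real.sqrt (p * Real.log n / n)

/-! ### Auxiliary lemmas -/

lemma qf_lower {p : ℕ} {M : Matrix (Fin p) (Fin p) ℝ} {a : ℝ} (hM : M.IsHermitian)
    (h : ∀ i, a ≤ hM.eigenvalues i) (v : Fin p → ℝ) :
    a * (v ⬝ᵥ v) ≤ v ⬝ᵥ M *ᵥ v := by
  have hps : (M - a • (1 : Matrix (Fin p) (Fin p) ℝ)).PosSemidef := by
    have hdec : M - a • (1 : Matrix (Fin p) (Fin p) ℝ) =
        (hM.eigenvectorUnitary : Matrix (Fin p) (Fin p) ℝ) *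
          Matrix.diagonal (fun i => hM.eigenvalues i - a) *
          star (hM.eigenvectorUnitary : Matrix (Fin p) (Fin p) ℝ) := by
      have h1 : Matrix.diagonal (fun i : Fin p => hM.eigenvalues i - a) =
          Matrix.diagonal (RCLike.ofReal ∘ hM.eigenvalues) - a • (1 : Matrix (Fin p) (Fin p) ℝ) := by
        rw [Matrix.smul_one_eq_diagonal, Matrix.diagonal_sub]
        rfl
      rw [h1, Matrix.mul_sub, Matrix.sub_mul]
      have h2 := hM.spectral_theorem
      simp only [Unitary.conjStarAlgAut_apply, Unitary.coe_star] at h2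
      rw [← h2]
      congr 1
      rw [Matrix.mul_smul, Matrix.smul_mul, Matrix.mul_one,
        (Matrix.mem_unitaryGroup_iff).mp (hM.eigenvectorUnitary).2]
    rw [hdec]
    exact (Matrix.PosSemidef.diagonal (fun i => sub_nonneg.2 (h i))).mul_mul_conjTranspose_same _
  have := hps.dotProduct_mulVec_nonneg v
  simp only [star_trivial, Matrix.sub_mulVec, Matrix.smul_mulVec, Matrix.one_mulVec,
    dotProduct_sub, dotProduct_smul, smul_eq_mul] at this
  linarith

lemma sum_bvec {p : ℕ} (v : E p) : ∑ j, v j • bvec j = v := by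
  ext k
  rw [show (∑ j, v j • bvec j) k = ∑ j, (v j • bvec j) k by rw [WithLp.ofLp_sum, Finset.sum_apply]]
  simp [bvec, EuclideanSpace.single_apply, Finset.sum_ite_eq', mul_comm]

lemma bilin_expand {p : ℕ} (B : E p →L[ℝ] (E p →L[ℝ] ℝ)) (v : E p) :
    B v v = (fun j => v j) ⬝ᵥ (Matrix.of fun j k => B (bvec j) (bvec k)) *ᵥ (fun j => v j) := by
  have h2 : ∀ j, B (bvec j) v = ∑ k, v k * B (bvec j) (bvec k) := by
    intro j
    conv_lhs => rw [← sum_bvec v]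
    rw [map_sum (B (bvec j)) (fun k => v k • bvec k) Finset.univ]
    exact Finset.sum_congr rfl fun k _ => by
      rw [ContinuousLinearMap.map_smul, smul_eq_mul]
  have h1 : ∀ w : E p, B v w = ∑ j, v j * B (bvec j) w := by
    intro w
    conv_lhs => rw [← sum_bvec v]
    rw [map_sum B (fun j => v j • bvec j) Finset.univ, ContinuousLinearMap.sum_apply]
    exact Finset.sum_congr rfl fun j _ => by
      rw [ContinuousLinearMap.map_smul, ContinuousLinearMap.smul_apply, smul_eq_mul]
  rw [h1 v]
  simp only [h2, dotProduct, Matrix.mulVec, Matrix.of_apply, Finset.mul_sum]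
  exact Finset.sum_congr rfl fun j _ => Finset.sum_congr rfl fun k _ => by
    ring

lemma norm_sq_eq_dot {p : ℕ} (v : E p) : ‖v‖ ^ 2 = (fun j => v j) ⬝ᵥ (fun j => v j) := by
  rw [← real_inner_self_eq_norm_sq]
  simp only [PiLp.inner_apply, RCLike.inner_apply, conj_trivial, dotProduct, mul_comm]

lemma taylor_quad {p : ℕ} {g : E p → ℝ} {θ0 : E p} {c δ : ℝ}
    (hg : ContDiff ℝ 2 g) (hd : fderiv ℝ g θ0 = 0)
    (hH : ∀ θ : E p, ‖θ - θ0‖ ≤ δ → ∀ w : E p, fderiv ℝ (fderiv ℝ g) θ w w ≤ -(c * ‖w‖ ^ 2))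
    {θ : E p} (hθ : ‖θ - θ0‖ ≤ δ) :
    g θ - g θ0 ≤ -(c / 2) * ‖θ - θ0‖ ^ 2 := by
  set v : E p := θ - θ0 with hv
  have hgdiff : Differentiable ℝ g := hg.differentiable (by norm_num)
  have hFdiff : Differentiable ℝ (fderiv ℝ g) :=
    (hg.fderiv_right (m := 1) (by norm_num)).differentiable (by norm_num)
  have hline : ∀ t : ℝ, HasDerivAt (fun s : ℝ => θ0 + s • v) v t := fun t => by
    simpa using ((hasDerivAt_id t).smul_const v).const_add θ0
  have hin : ∀ t : ℝ, t ∈ Set.Icc (0:ℝ) 1 → ‖(θ0 + t • v) - θ0‖ ≤ δ := by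
    intro t ht
    have : ‖(θ0 + t • v) - θ0‖ = |t| * ‖v‖ := by
      rw [add_sub_cancel_left, norm_smul, Real.norm_eq_abs]
    rw [this]
    calc |t| * ‖v‖ ≤ 1 * ‖v‖ := by
          apply mul_le_mul_of_nonneg_right _ (norm_nonneg v)
          rw [abs_le]; exact ⟨by linarith [ht.1], ht.2⟩
      _ = ‖v‖ := one_mul _
      _ ≤ δ := hθ
  have hφ : ∀ t : ℝ, HasDerivAt (fun s : ℝ => g (θ0 + s • v))
      (fderiv ℝ g (θ0 + t • v) v) t := fun t =>
    (hgdiff (θ0 + t • v)).hasFDerivAt.comp_hasDerivAt t (hline t)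
  have hψ : ∀ t : ℝ, HasDerivAt (fun s : ℝ => fderiv ℝ g (θ0 + s • v) v)
      (fderiv ℝ (fderiv ℝ g) (θ0 + t • v) v v) t := by
    intro t
    have h := ((hFdiff (θ0 + t • v)).hasFDerivAt.comp_hasDerivAt t (hline t))
    have h2 := h.clm_apply (hasDerivAt_const t v)
    simpa using h2
  set χ : ℝ → ℝ := fun t => fderiv ℝ g (θ0 + t • v) v + c * ‖v‖ ^ 2 * t with hχdef
  have hχd : ∀ t : ℝ, HasDerivAt χ
      (fderiv ℝ (fderiv ℝ g) (θ0 + t • v) v v + c * ‖v‖ ^ 2) t := by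
    intro t
    have h2 : HasDerivAt (fun s : ℝ => c * ‖v‖ ^ 2 * s) (c * ‖v‖ ^ 2) t := by
      simpa using (hasDerivAt_id t).const_mul (c * ‖v‖ ^ 2)
    exact (hψ t).add h2
  have hχanti : AntitoneOn χ (Set.Icc (0:ℝ) 1) := by
    apply antitoneOn_of_deriv_nonpos (convex_Icc 0 1)
    · exact fun t _ => ((hχd t).continuousAt).continuousWithinAt
    · exact fun t _ => ((hχd t).differentiableAt).differentiableWithinAt
    · intro t ht
      rw [interior_Icc] at ht
      rw [(hχd t).deriv]
      have := hH (θ0 + t • v) (hin t ⟨le_of_lt ht.1, le_of_lt ht.2⟩) v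
      linarith
  have hχ0 : χ 0 = 0 := by simp [hχdef, hd]
  have hχle : ∀ t ∈ Set.Icc (0:ℝ) 1, χ t ≤ 0 := by
    intro t ht
    have := hχanti (Set.left_mem_Icc.2 zero_le_one) ht ht.1
    rwa [hχ0] at this
  set ω : ℝ → ℝ := fun t => g (θ0 + t • v) + c * ‖v‖ ^ 2 * (t ^ 2 / 2) with hωdef
  have hωd : ∀ t : ℝ, HasDerivAt ω (χ t) t := by
    intro t
    have h2 : HasDerivAt (fun s : ℝ => c * ‖v‖ ^ 2 * (s ^ 2 / 2)) (c * ‖v‖ ^ 2 * t) t := by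
      have := ((hasDerivAt_pow 2 t).div_const 2).const_mul (c * ‖v‖ ^ 2)
      exact this.congr_deriv (by norm_num)
    exact (hφ t).add h2
  have hωanti : AntitoneOn ω (Set.Icc (0:ℝ) 1) := by
    apply antitoneOn_of_deriv_nonpos (convex_Icc 0 1)
    · exact fun t _ => ((hωd t).continuousAt).continuousWithinAt
    · exact fun t _ => ((hωd t).differentiableAt).differentiableWithinAt
    · intro t ht
      rw [interior_Icc] at ht
      rw [(hωd t).deriv]
      exact hχle t ⟨le_of_lt ht.1, le_of_lt ht.2⟩
  have hfin := hωanti (Set.left_mem_Icc.2 zero_le_one) (Set.right_mem_Icc.2 zero_le_one)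
    zero_le_one
  simp only [hωdef] at hfin
  rw [one_smul, hv, add_sub_cancel] at hfin
  simp only [zero_smul, add_zero] at hfin
  norm_num at hfin
  linarith

lemma gauss_integrable {p : ℕ} {b : ℝ} (hb : 0 < b) :
    Integrable (fun v : E p => Real.exp (-b * ‖v‖ ^ 2)) := by
  have h := GaussianFourier.integrable_cexp_neg_mul_sq_norm_add (V := E p) (b := (b : ℂ))
    (by simpa using hb) 0 (0 : E p)
  have h2 := h.re
  refine h2.congr (Filter.Eventually.of_forall fun v => ?_)
  show RCLike.re (Complex.exp _) = _
  rw [show (-(b:ℂ) * (‖v‖:ℂ)^2 + 0 * ((inner ℝ (0 : E p) v : ℝ) : ℂ)) = ((-b * ‖v‖^2 : ℝ) : ℂ) by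
    push_cast; ring]
  exact Complex.exp_ofReal_re _

lemma gauss_integral {p : ℕ} {b : ℝ} (hb : 0 < b) :
    ∫ v : E p, Real.exp (-b * ‖v‖ ^ 2) = (π / b) ^ ((p : ℝ) / 2) := by
  rw [GaussianFourier.integral_rexp_neg_mul_sq_norm hb]
  norm_num [finrank_euclideanSpace]

/-- Lemma on the annulus contribution.
If `∇ g_n (θ̂_n) = 0`, every eigenvalue of `−g_n''(θ)` lies in `[η₁ n, η₂ n]` on the
`δ`-ball around `θ̂_n`, and `p(n) ≤ A n^α` with `α < 1`, then there is `N`, depending only on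
`η₁, η₂, δ, A, α`, such that for all `n ≥ N` the normalized integral of
`exp(g_n(θ) − g_n(θ̂_n))` over the annulus `γ_n < ‖θ − θ̂_n‖₂ ≤ δ` is at most `n^{−η₁ p / 4}`. -/
theorem annulus_contribution_bound
    (δ η₁ η₂ A α : ℝ) (hδ : 0 < δ) (hη₁ : 0 < η₁) (hη₁₂ : η₁ ≤ η₂)
    (hA : 0 < A) (hα0 : 0 < α) (hα : α < 1) :
    ∃ N : ℕ, ∀ (p : ℕ → ℕ) (g : (n : ℕ) → E (p n) → ℝ) (θhat : (n : ℕ) → E (p n)),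
      (∀ n, (p n : ℝ) ≤ A * (n : ℝ) ^ α) →
      (∀ n, ContDiff ℝ 2 (g n)) →
      (∀ n, fderiv ℝ (g n) (θhat n) = 0) →
      (∀ n, ∀ θ : E (p n), ‖θ - θhat n‖ ≤ δ →
        eigsIn (-(hess (g n) θ)) (η₁ * n) (η₂ * n)) →
      ∀ n ≥ N,
        Real.sqrt ((-(hess (g n) (θhat n))).det) * (2 * π) ^ (-(p n : ℝ) / 2) *
          (∫ θ in {θ : E (p n) | gam (p n) n < ‖θ - θhat n‖ ∧ ‖θ - θhat n‖ ≤ δ},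
            Real.exp (g n θ - g n (θhat n)))
        ≤ (n : ℝ) ^ (-(η₁ * p n) / 4) := by
  refine ⟨max 2 ⌈(4 * η₂ / η₁) ^ ((4:ℝ) / η₁)⌉₊, ?_⟩
  intro p g θhat hpA hg hgrad heig n hn
  -- basic facts about n
  have hn2 : 2 ≤ n := le_trans (le_max_left _ _) hn
  have hn1 : (1:ℝ) ≤ (n:ℝ) := by exact_mod_cast le_trans (by norm_num) hn2
  have hn0 : (0:ℝ) < (n:ℝ) := lt_of_lt_of_le one_pos hn1
  have hlogn : 0 ≤ Real.log n := Real.log_nonneg hn1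
  have hNn : (4 * η₂ / η₁) ^ ((4:ℝ) / η₁) ≤ (n:ℝ) := by
    have h1 : (⌈(4 * η₂ / η₁) ^ ((4:ℝ) / η₁)⌉₊ : ℝ) ≤ (n:ℝ) := by
      exact_mod_cast le_trans (le_max_right _ _) hn
    exact le_trans (Nat.le_ceil _) h1
  have hη₂ : 0 < η₂ := lt_of_lt_of_le hη₁ hη₁₂
  set m := p n with hm
  set G : E m → ℝ := g n with hG
  set θ0 : E m := θhat n with hθ0
  set S : Set (E m) := {θ : E m | gam m n < ‖θ - θ0‖ ∧ ‖θ - θ0‖ ≤ δ} with hSdef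
  set b : ℝ := η₁ * n / 8 with hbdef
  have hb : 0 < b := by positivity
  -- Hessian as second fderiv
  have hessEq : ∀ θ : E m, hess G θ =
      Matrix.of fun j k => fderiv ℝ (fderiv ℝ G) θ (bvec j) (bvec k) := by
    intro θ
    ext j k
    simp only [hess, pd, Matrix.of_apply]
    rw [iteratedFDeriv_two_apply]
    simp
  -- second derivative bound
  have hsecond : ∀ θ : E m, ‖θ - θ0‖ ≤ δ → ∀ w : E m,
      fderiv ℝ (fderiv ℝ G) θ w w ≤ -((η₁ * n) * ‖w‖ ^ 2) := by
    intro θ hθ w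
    obtain ⟨hM, hev⟩ := heig n θ hθ
    have hq := qf_lower hM (fun i => (hev i).1) (fun j => w j)
    rw [Matrix.neg_mulVec, dotProduct_neg] at hq
    have hB := bilin_expand (fderiv ℝ (fderiv ℝ G) θ) w
    rw [← hessEq θ] at hB
    rw [hB, ← norm_sq_eq_dot] at *
    linarith
  -- Taylor bound
  have htay : ∀ θ : E m, ‖θ - θ0‖ ≤ δ →
      G θ - G θ0 ≤ -((η₁ * n) / 2) * ‖θ - θ0‖ ^ 2 :=
    fun θ hθ => taylor_quad (hg n) (hgrad n) hsecond hθ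
  -- pointwise exponential bound on the annulus
  set Cst : ℝ := (n:ℝ) ^ (-(3 * η₁ * m) / 8 : ℝ) with hCst
  have hCst0 : 0 ≤ Cst := Real.rpow_nonneg (le_of_lt hn0) _
  have hptwise : ∀ θ ∈ S, Real.exp (G θ - G θ0) ≤ Cst * Real.exp (-b * ‖θ - θ0‖ ^ 2) := by
    intro θ hθS
    obtain ⟨hγ, hδ'⟩ := hθS
    have hnorm0 : 0 ≤ ‖θ - θ0‖ := norm_nonneg _
    have hγsq : (m : ℝ) * Real.log n / n ≤ ‖θ - θ0‖ ^ 2 := by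
      have h1 : gam m n ^ 2 = (m : ℝ) * Real.log n / n := by
        rw [gam, Real.sq_sqrt (by positivity)]
      rw [← h1]
      exact pow_le_pow_left₀ (Real.sqrt_nonneg _) (le_of_lt hγ) 2
    have h2 := htay θ hδ'
    have key : G θ - G θ0 ≤ (-(3 * η₁ * m) / 8) * Real.log n + (-b * ‖θ - θ0‖ ^ 2) := by
      have e1 : -((η₁ * n) / 2) * ‖θ - θ0‖ ^ 2 =
          -(3 * η₁ * n / 8) * ‖θ - θ0‖ ^ 2 + (-b * ‖θ - θ0‖ ^ 2) := by
        rw [hbdef]; ring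
      have e2 : -(3 * η₁ * n / 8) * ‖θ - θ0‖ ^ 2 ≤
          -(3 * η₁ * n / 8) * ((m : ℝ) * Real.log n / n) := by
        apply mul_le_mul_of_nonpos_left hγsq
        have : (0:ℝ) ≤ 3 * η₁ * n / 8 := by positivity
        linarith
      have e3 : -(3 * η₁ * n / 8) * ((m : ℝ) * Real.log n / n) =
          (-(3 * η₁ * m) / 8) * Real.log n := by
        field_simp
      linarith
    calc Real.exp (G θ - G θ0)
        ≤ Real.exp ((-(3 * η₁ * m) / 8) * Real.log n + (-b * ‖θ - θ0‖ ^ 2)) :=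
          Real.exp_le_exp.2 key
      _ = Cst * Real.exp (-b * ‖θ - θ0‖ ^ 2) := by
          rw [Real.exp_add, hCst, Real.rpow_def_of_pos hn0, mul_comm (Real.log n)]
  -- measurability and integrability
  have hScont : Continuous fun θ : E m => ‖θ - θ0‖ :=
    (continuous_id.sub continuous_const).norm
  have hS : MeasurableSet S := by
    have : S = (fun θ : E m => ‖θ - θ0‖) ⁻¹' (Set.Ioc (gam m n) δ) := rfl
    rw [this]
    exact hScont.measurable measurableSet_Ioc
  have hgauss : Integrable (fun θ : E m => Real.exp (-b * ‖θ - θ0‖ ^ 2)) :=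
    (gauss_integrable hb).comp_sub_right θ0
  have hgaussC : Integrable (fun θ : E m => Cst * Real.exp (-b * ‖θ - θ0‖ ^ 2)) :=
    hgauss.const_mul Cst
  have hfmeas : AEStronglyMeasurable (fun θ : E m => Real.exp (G θ - G θ0))
      (volume.restrict S) :=
    (Real.continuous_exp.comp (((hg n).continuous).sub continuous_const)).aestronglyMeasurable
  have hfint : IntegrableOn (fun θ : E m => Real.exp (G θ - G θ0)) S := by
    apply Integrable.mono' hgaussC.integrableOn hfmeas
    rw [ae_restrict_iff' hS]
    exact Filter.Eventually.of_forall fun θ hθ => by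
      rw [Real.norm_eq_abs, abs_of_nonneg (Real.exp_nonneg _)]
      exact hptwise θ hθ
  -- the integral bound
  have hI : (∫ θ in S, Real.exp (G θ - G θ0)) ≤ Cst * (π / b) ^ ((m:ℝ) / 2) := by
    calc (∫ θ in S, Real.exp (G θ - G θ0))
        ≤ ∫ θ in S, Cst * Real.exp (-b * ‖θ - θ0‖ ^ 2) :=
          setIntegral_mono_on hfint hgaussC.integrableOn hS hptwise
      _ ≤ ∫ θ : E m, Cst * Real.exp (-b * ‖θ - θ0‖ ^ 2) :=
          setIntegral_le_integral hgaussC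
            (Filter.Eventually.of_forall fun θ => by positivity)
      _ = Cst * ∫ θ : E m, Real.exp (-b * ‖θ - θ0‖ ^ 2) := integral_const_mul _ _
      _ = Cst * ∫ θ : E m, Real.exp (-b * ‖θ‖ ^ 2) := by
          rw [integral_sub_right_eq_self (fun θ : E m => Real.exp (-b * ‖θ‖ ^ 2)) θ0]
      _ = Cst * (π / b) ^ ((m:ℝ) / 2) := by rw [gauss_integral hb]
  have hI0 : 0 ≤ ∫ θ in S, Real.exp (G θ - G θ0) :=
    integral_nonneg fun θ => Real.exp_nonneg _
  -- determinant bound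
  obtain ⟨hM0, hev0⟩ := heig n θ0 (by rw [sub_self, norm_zero]; exact le_of_lt hδ)
  have hdet : (-(hess G θ0)).det ≤ (η₂ * n) ^ m := by
    have h1 : (-(hess G θ0)).det = ∏ i, hM0.eigenvalues i := by
      rw [hM0.det_eq_prod_eigenvalues]; norm_num
    rw [h1]
    calc ∏ i, hM0.eigenvalues i ≤ ∏ _i : Fin m, (η₂ * n) := by
          apply Finset.prod_le_prod
          · exact fun i _ => le_trans (by positivity) (hev0 i).1
          · exact fun i _ => (hev0 i).2
      _ = (η₂ * n) ^ m := by rw [Finset.prod_const, Finset.card_univ, Fintype.card_fin]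
  have hsqrtdet : Real.sqrt ((-(hess G θ0)).det) ≤ (η₂ * n) ^ ((m:ℝ) / 2) := by
    calc Real.sqrt ((-(hess G θ0)).det) ≤ Real.sqrt ((η₂ * n) ^ m) := Real.sqrt_le_sqrt hdet
      _ = (η₂ * n) ^ ((m:ℝ) / 2) := by
          rw [Real.sqrt_eq_rpow, ← Real.rpow_natCast (η₂ * n) m, ← Real.rpow_mul (by positivity)]
          congr 1
          ring
  -- key comparison for large n
  have hkey : (4 * η₂ / η₁) ^ ((m:ℝ) / 2) ≤ (n:ℝ) ^ (η₁ * (m:ℝ) / 8) := by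
    have hx0 : (0:ℝ) ≤ 4 * η₂ / η₁ := by positivity
    have e1 : (4 * η₂ / η₁) ^ ((m:ℝ) / 2) =
        ((4 * η₂ / η₁) ^ ((4:ℝ) / η₁)) ^ (η₁ * (m:ℝ) / 8) := by
      rw [← Real.rpow_mul hx0]
      congr 1
      field_simp
      ring
    rw [e1]
    exact Real.rpow_le_rpow (Real.rpow_nonneg hx0 _) hNn (by positivity)
  -- nonnegativity of factors
  have hP0 : (0:ℝ) ≤ (2 * π) ^ (-(m : ℝ) / 2) := Real.rpow_nonneg (by positivity) _
  have hD0 : 0 ≤ Real.sqrt ((-(hess G θ0)).det) := Real.sqrt_nonneg _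
  -- final chain
  calc Real.sqrt ((-(hess G θ0)).det) * (2 * π) ^ (-(m : ℝ) / 2) *
        (∫ θ in S, Real.exp (G θ - G θ0))
      ≤ ((η₂ * n) ^ ((m:ℝ) / 2) * (2 * π) ^ (-(m : ℝ) / 2)) *
        (Cst * (π / b) ^ ((m:ℝ) / 2)) := by
        apply mul_le_mul (mul_le_mul_of_nonneg_right hsqrtdet hP0) hI hI0 (by positivity)
    _ = Cst * ((η₂ * n) * (2 * π)⁻¹ * (π / b)) ^ ((m:ℝ) / 2) := by
        rw [show (-(m:ℝ) / 2) = -((m:ℝ)/2) by ring, Real.rpow_neg (by positivity),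
          ← Real.inv_rpow (by positivity),
          ← Real.mul_rpow (by positivity) (by positivity),
          Real.mul_rpow (mul_nonneg (le_of_lt (mul_pos hη₂ hn0)) (by positivity))
            (le_of_lt (div_pos Real.pi_pos hb))]
        ring
    _ = Cst * (4 * η₂ / η₁) ^ ((m:ℝ) / 2) := by
        congr 2
        rw [hbdef]
        field_simp
        ring
    _ ≤ Cst * (n:ℝ) ^ (η₁ * (m:ℝ) / 8) := mul_le_mul_of_nonneg_left hkey hCst0
    _ = (n:ℝ) ^ (-(η₁ * m) / 4) := by
        rw [hCst, ← Real.rpow_add hn0]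
        congr 1
        ring
end
end

section
/- Define, for j,k ≤ p, the matrices A_j = n^{3/2} Σ_{l=1}^p (Σ^{−1/2})_{lj} Σ^{−1/2} G_l Σ^{−1/2} and B_{jk} = n² Σ_{l=1}^p Σ_{m=1}^p (Σ^{−1/2})_{lj} (Σ^{−1/2})_{mk} Σ^{−1/2} H_{lm} Σ^{−1/2}. Then: (i) with the change of variables θ = n^{1/2} Σ^{−1/2} θ̄, one has Σ_{j=1}^p θ_j (θᵀ G_j θ) = Σ_{j=1}^p θ̄_j (θ̄ᵀ A_j θ̄) and Σ_{j,k=1}^p θ_j θ_k (θᵀ H_{jk} θ) = Σ_{j,k=1}^p θ̄_j θ̄_k (θ̄ᵀ B_{jk} θ̄) for all θ̄ ∈ ℝ^p; and (ii) there exists a constant C depending only on η₁, η₂, η₃, η₄, η₅, η₆, c such that the operator norms satisfy ‖A_j‖_op ≤ C p^{c_∞} n^{c₃} and ‖B_{jk}‖_op ≤ C p^{2c_∞} n^{c₄} for all j,k ≤ p. -/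
open MeasureTheory Real Filter Matrix

noncomputable section

/-- quadratic form `vᵀ M v`. -/
def qf {p : ℕ} (M : Matrix (Fin p) (Fin p) ℝ) (v : Fin p → ℝ) : ℝ :=
  v ⬝ᵥ M.mulVec v

/-- Operator (spectral) norm of a real matrix, via the induced map on Euclidean spaces. -/
def opNorm {p q : ℕ} (M : Matrix (Fin p) (Fin q) ℝ) : ℝ :=
  ‖LinearMap.toContinuousLinearMap (Matrix.toEuclideanLin M)‖

/-- `A_j = n^{3/2} Σ_l (Σ^{−1/2})_{lj} Σ^{−1/2} G_l Σ^{−1/2}`, with `R = Σ^{−1/2}`. -/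
def Amat {p : ℕ} (n : ℕ) (R : Matrix (Fin p) (Fin p) ℝ)
    (G : Fin p → Matrix (Fin p) (Fin p) ℝ) (j : Fin p) : Matrix (Fin p) (Fin p) ℝ :=
  (n : ℝ) ^ ((3 : ℝ) / 2) • ∑ l, R l j • (R * G l * R)

/-- `B_{jk} = n² Σ_l Σ_m (Σ^{−1/2})_{lj} (Σ^{−1/2})_{mk} Σ^{−1/2} H_{lm} Σ^{−1/2}`. -/
def Bmat {p : ℕ} (n : ℕ) (R : Matrix (Fin p) (Fin p) ℝ)
    (H : Fin p → Fin p → Matrix (Fin p) (Fin p) ℝ) (j k : Fin p) :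
    Matrix (Fin p) (Fin p) ℝ :=
  ((n : ℝ) ^ 2) • ∑ l, ∑ m, (R l j * R m k) • (R * H l m * R)

open scoped Matrix.Norms.L2Operator

namespace RescaledAux

lemma qf_smul {p : ℕ} (a : ℝ) (M : Matrix (Fin p) (Fin p) ℝ) (v : Fin p → ℝ) :
    qf (a • M) v = a * qf M v := by
  simp [qf, Matrix.smul_mulVec, dotProduct_smul, smul_eq_mul]

lemma qf_sum {p : ℕ} {ι : Type*} (s : Finset ι) (M : ι → Matrix (Fin p) (Fin p) ℝ)
    (v : Fin p → ℝ) : qf (∑ i ∈ s, M i) v = ∑ i ∈ s, qf (M i) v := by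
  classical
  induction s using Finset.induction with
  | empty => simp [qf]
  | insert a s h ih =>
      rw [Finset.sum_insert h, Finset.sum_insert h, ← ih]
      simp [qf, Matrix.add_mulVec, dotProduct_add]

lemma qf_smulvec {p : ℕ} (a : ℝ) (M : Matrix (Fin p) (Fin p) ℝ) (v : Fin p → ℝ) :
    qf M (a • v) = a * (a * qf M v) := by
  simp [qf, Matrix.mulVec_smul, smul_dotProduct, dotProduct_smul,
    smul_eq_mul, mul_assoc]

lemma qf_conj {p : ℕ} {R : Matrix (Fin p) (Fin p) ℝ} (hRt : Rᵀ = R)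
    (M : Matrix (Fin p) (Fin p) ℝ) (v : Fin p → ℝ) :
    qf M (R.mulVec v) = qf (R * M * R) v := by
  unfold qf
  have h1 : R.mulVec v = Matrix.vecMul v R := by
    conv_rhs => rw [← hRt]
    rw [Matrix.vecMul_transpose]
  calc (R *ᵥ v) ⬝ᵥ M *ᵥ (R *ᵥ v) = (v ᵥ* R) ⬝ᵥ (M * R) *ᵥ v := by
        rw [Matrix.mulVec_mulVec, h1]
    _ = v ⬝ᵥ R *ᵥ ((M * R) *ᵥ v) := (Matrix.dotProduct_mulVec _ _ _).symm
    _ = v ⬝ᵥ (R * M * R) *ᵥ v := by rw [Matrix.mulVec_mulVec, mul_assoc]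

lemma sum_swap_pairs {α : Type*} [AddCommMonoid α] {p : ℕ}
    (f : Fin p → Fin p → Fin p → Fin p → α) :
    ∑ j, ∑ k, ∑ l, ∑ m, f j k l m = ∑ j, ∑ k, ∑ l, ∑ m, f l m j k := by
  calc ∑ j, ∑ k, ∑ l, ∑ m, f j k l m
      = ∑ j, ∑ l, ∑ k, ∑ m, f j k l m := Finset.sum_congr rfl fun j _ => Finset.sum_comm
    _ = ∑ l, ∑ j, ∑ k, ∑ m, f j k l m := Finset.sum_comm
    _ = ∑ l, ∑ j, ∑ m, ∑ k, f j k l m :=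
        Finset.sum_congr rfl fun l _ => Finset.sum_congr rfl fun j _ => Finset.sum_comm
    _ = ∑ l, ∑ m, ∑ j, ∑ k, f j k l m := Finset.sum_congr rfl fun l _ => Finset.sum_comm

lemma rpow_3half (n : ℕ) : (n:ℝ) ^ ((3:ℝ)/2) = Real.sqrt n * n := by
  rcases Nat.eq_zero_or_pos n with h | h
  · subst h; simp
  · have hn : (0:ℝ) < n := by exact_mod_cast h
    rw [show (3:ℝ)/2 = 1/2 + 1 by norm_num, Real.rpow_add hn, Real.rpow_one,
      Real.sqrt_eq_rpow]

lemma partI_A {p n : ℕ} {R : Matrix (Fin p) (Fin p) ℝ} (hRt : Rᵀ = R)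
    (G : Fin p → Matrix (Fin p) (Fin p) ℝ) (θb : Fin p → ℝ) :
    ∑ j, (Real.sqrt n • R.mulVec θb) j * qf (G j) (Real.sqrt n • R.mulVec θb)
      = ∑ j, θb j * qf (Amat n R G j) θb := by
  have hq : Real.sqrt n * Real.sqrt n = n := Real.mul_self_sqrt (Nat.cast_nonneg n)
  have expand : ∀ M : Matrix (Fin p) (Fin p) ℝ,
      qf M (Real.sqrt n • R.mulVec θb) = (n:ℝ) * qf (R * M * R) θb := fun M => by
    rw [qf_smulvec, qf_conj hRt, ← mul_assoc, hq]
  have expandA : ∀ j, qf (Amat n R G j) θb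
      = Real.sqrt n * n * ∑ l, R l j * qf (R * G l * R) θb := fun j => by
    rw [Amat, qf_smul, rpow_3half, qf_sum]
    congr 1
    exact Finset.sum_congr rfl fun l _ => qf_smul _ _ _
  have hw : ∀ j, (R.mulVec θb) j = ∑ l, R j l * θb l := fun j => rfl
  simp only [Pi.smul_apply, smul_eq_mul, expand, expandA]
  calc ∑ j, Real.sqrt ↑n * (R *ᵥ θb) j * (↑n * qf (R * G j * R) θb)
      = ∑ j, ∑ l, Real.sqrt ↑n * ↑n * (R j l * θb l * qf (R * G j * R) θb) := by
        refine Finset.sum_congr rfl fun j _ => ?_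
        rw [hw j, Finset.mul_sum, Finset.sum_mul]
        exact Finset.sum_congr rfl fun l _ => by ring
    _ = ∑ j, ∑ l, Real.sqrt ↑n * ↑n * (R l j * θb j * qf (R * G l * R) θb) :=
        Finset.sum_comm
    _ = ∑ j, θb j * (Real.sqrt ↑n * ↑n * ∑ l, R l j * qf (R * G l * R) θb) := by
        refine Finset.sum_congr rfl fun j _ => ?_
        rw [Finset.mul_sum, Finset.mul_sum]
        exact Finset.sum_congr rfl fun l _ => by ring

lemma partI_B {p n : ℕ} {R : Matrix (Fin p) (Fin p) ℝ} (hRt : Rᵀ = R)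
    (H : Fin p → Fin p → Matrix (Fin p) (Fin p) ℝ) (θb : Fin p → ℝ) :
    ∑ j, ∑ k, (Real.sqrt n • R.mulVec θb) j * (Real.sqrt n • R.mulVec θb) k *
        qf (H j k) (Real.sqrt n • R.mulVec θb)
      = ∑ j, ∑ k, θb j * θb k * qf (Bmat n R H j k) θb := by
  set a : ℝ := Real.sqrt n with ha
  have hq : a * a = (n:ℝ) := Real.mul_self_sqrt (Nat.cast_nonneg n)
  have expand : ∀ M : Matrix (Fin p) (Fin p) ℝ,
      qf M (Real.sqrt n • R.mulVec θb) = (n:ℝ) * qf (R * M * R) θb := fun M => by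
    rw [qf_smulvec, qf_conj hRt, ← mul_assoc, hq]
  have expandB : ∀ j k, qf (Bmat n R H j k) θb
      = (n:ℝ)^2 * ∑ l, ∑ m, R l j * R m k * qf (R * H l m * R) θb := fun j k => by
    rw [Bmat, qf_smul, qf_sum]
    congr 1
    refine Finset.sum_congr rfl fun l _ => ?_
    rw [qf_sum]
    exact Finset.sum_congr rfl fun m _ => qf_smul _ _ _
  have hw : ∀ j, (R.mulVec θb) j = ∑ l, R j l * θb l := fun j => rfl
  simp only [ha, Pi.smul_apply, smul_eq_mul, expand, expandB]
  calc ∑ j, ∑ k, Real.sqrt ↑n * (R *ᵥ θb) j * (Real.sqrt ↑n * (R *ᵥ θb) k) *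
        (↑n * qf (R * H j k * R) θb)
      = ∑ j, ∑ k, ∑ l, ∑ m, (n:ℝ)^2 *
          (R j l * θb l * (R k m * θb m) * qf (R * H j k * R) θb) := by
        refine Finset.sum_congr rfl fun j _ => Finset.sum_congr rfl fun k _ => ?_
        rw [hw j, hw k, Finset.mul_sum, Finset.mul_sum, Finset.sum_mul_sum, Finset.sum_mul]
        refine Finset.sum_congr rfl fun l _ => ?_
        rw [Finset.sum_mul]
        refine Finset.sum_congr rfl fun m _ => ?_
        linear_combination (R j l * θb l * (R k m * θb m) *
          qf (R * H j k * R) θb * (n:ℝ)) * hq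
    _ = ∑ j, ∑ k, ∑ l, ∑ m, (n:ℝ)^2 *
          (R l j * θb j * (R m k * θb k) * qf (R * H l m * R) θb) :=
        sum_swap_pairs _
    _ = ∑ j, ∑ k, θb j * θb k *
          ((n:ℝ)^2 * ∑ l, ∑ m, R l j * R m k * qf (R * H l m * R) θb) := by
        refine Finset.sum_congr rfl fun j _ => Finset.sum_congr rfl fun k _ => ?_
        rw [Finset.mul_sum, Finset.mul_sum]
        refine Finset.sum_congr rfl fun l _ => ?_
        rw [Finset.mul_sum, Finset.mul_sum]
        exact Finset.sum_congr rfl fun m _ => by ring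

lemma diag_norm_le {p : ℕ} {v : Fin p → ℝ} {b : ℝ} (hb : 0 ≤ b) (h : ∀ i, |v i| ≤ b) :
    ‖Matrix.diagonal v‖ ≤ b := by
  rw [Matrix.l2_opNorm_def]
  apply ContinuousLinearMap.opNorm_le_bound _ hb
  intro x
  have hx : ∀ i, ((Matrix.toEuclideanLin (Matrix.diagonal v)) x) i = v i * x i := by
    intro i
    have := congrFun (Matrix.piLp_ofLp_toEuclideanLin (Matrix.diagonal v) x) i
    simpa [Matrix.mulVec_diagonal] using this
  rw [EuclideanSpace.norm_eq, EuclideanSpace.norm_eq]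
  simp only [LinearEquiv.trans_apply, LinearMap.coe_toContinuousLinearMap']
  calc Real.sqrt (∑ i, ‖(Matrix.toEuclideanLin (Matrix.diagonal v)) x i‖ ^ 2)
      = Real.sqrt (∑ i, (v i * x i) ^ 2) := by
        congr 1; exact Finset.sum_congr rfl fun i _ => by rw [hx i, Real.norm_eq_abs, sq_abs]
    _ ≤ Real.sqrt (∑ i, b ^ 2 * ‖x i‖ ^ 2) := by
        apply Real.sqrt_le_sqrt
        refine Finset.sum_le_sum fun i _ => ?_
        rw [mul_pow, Real.norm_eq_abs, ← sq_abs (x i), ← sq_abs (v i)]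
        gcongr
        exact h i
    _ = b * Real.sqrt (∑ i, ‖x i‖ ^ 2) := by
        rw [← Finset.mul_sum, Real.sqrt_mul (by positivity), Real.sqrt_sq hb]

lemma unit_norm_le {p : ℕ} {A : Matrix (Fin p) (Fin p) ℝ} (h : star A * A = 1) : ‖A‖ ≤ 1 := by
  have h1 : ‖A‖ * ‖A‖ = ‖(1 : Matrix (Fin p) (Fin p) ℝ)‖ := by
    rw [← Matrix.l2_opNorm_conjTranspose_mul_self, ← Matrix.star_eq_conjTranspose, h]
  have h2 : ‖(1 : Matrix (Fin p) (Fin p) ℝ)‖ ≤ 1 := by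
    rw [Matrix.cstar_norm_def, _root_.map_one]
    exact ContinuousLinearMap.norm_id_le
  nlinarith [norm_nonneg A]

lemma conj_diag_norm_le {p : ℕ} {U : Matrix (Fin p) (Fin p) ℝ}
    (hU1 : star U * U = 1) (hU2 : U * star U = 1) {v : Fin p → ℝ} {b : ℝ}
    (hb : 0 ≤ b) (hv : ∀ i, |v i| ≤ b) :
    ‖U * Matrix.diagonal v * star U‖ ≤ b := by
  have hU : ‖U‖ ≤ 1 := unit_norm_le hU1
  have hUs : ‖star U‖ ≤ 1 := by
    apply unit_norm_le; rw [star_star]; exact hU2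
  have hD : ‖(Matrix.diagonal v : Matrix (Fin p) (Fin p) ℝ)‖ ≤ b := diag_norm_le hb hv
  calc ‖U * Matrix.diagonal v * star U‖
      ≤ ‖U * Matrix.diagonal v‖ * ‖star U‖ := Matrix.l2_opNorm_mul _ _
    _ ≤ (‖U‖ * ‖(Matrix.diagonal v : Matrix (Fin p) (Fin p) ℝ)‖) * ‖star U‖ := by
        gcongr; exact Matrix.l2_opNorm_mul _ _
    _ ≤ (1 * b) * 1 :=
        mul_le_mul (mul_le_mul hU hD (norm_nonneg _) zero_le_one) hUs (norm_nonneg _)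
          (by positivity)
    _ = b := by ring

lemma herm_norm_le {p : ℕ} {M : Matrix (Fin p) (Fin p) ℝ} (hM : M.IsHermitian) {b : ℝ}
    (hb : 0 ≤ b) (h : ∀ i, |hM.eigenvalues i| ≤ b) : ‖M‖ ≤ b := by
  conv_lhs => rw [hM.spectral_theorem]
  have hof : (RCLike.ofReal ∘ hM.eigenvalues : Fin p → ℝ) = hM.eigenvalues := by
    funext i; simp [RCLike.ofReal_real_eq_id]
  rw [hof]
  exact conj_diag_norm_le (Matrix.mem_unitaryGroup_iff'.mp hM.eigenvectorUnitary.2)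
    (Matrix.mem_unitaryGroup_iff.mp hM.eigenvectorUnitary.2) hb h

lemma inv_norm_le {p : ℕ} {S : Matrix (Fin p) (Fin p) ℝ} (hM : S.IsHermitian) {a : ℝ}
    (ha : 0 < a) (hev : ∀ i, a ≤ hM.eigenvalues i) : ‖S⁻¹‖ ≤ a⁻¹ := by
  have hpos : ∀ i, 0 < hM.eigenvalues i := fun i => lt_of_lt_of_le ha (hev i)
  set U : Matrix (Fin p) (Fin p) ℝ := (hM.eigenvectorUnitary : Matrix (Fin p) (Fin p) ℝ)
    with hUdef
  have hUU : star U * U = 1 := Matrix.mem_unitaryGroup_iff'.mp hM.eigenvectorUnitary.2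
  have hUU' : U * star U = 1 := Matrix.mem_unitaryGroup_iff.mp hM.eigenvectorUnitary.2
  have hof : (RCLike.ofReal ∘ hM.eigenvalues : Fin p → ℝ) = hM.eigenvalues := by
    funext i; simp [RCLike.ofReal_real_eq_id]
  have hS : S = U * Matrix.diagonal hM.eigenvalues * star U := by
    have h' := hM.spectral_theorem
    rw [hof] at h'
    exact h'
  have hid : S⁻¹ = U * Matrix.diagonal (fun i => (hM.eigenvalues i)⁻¹) * star U := by
    apply Matrix.inv_eq_right_inv
    calc S * (U * Matrix.diagonal (fun i => (hM.eigenvalues i)⁻¹) * star U)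
        = (U * Matrix.diagonal hM.eigenvalues * star U) *
          (U * Matrix.diagonal (fun i => (hM.eigenvalues i)⁻¹) * star U) := by rw [← hS]
      _ = U * (Matrix.diagonal hM.eigenvalues *
            ((star U * U) * (Matrix.diagonal (fun i => (hM.eigenvalues i)⁻¹) * star U))) := by
          simp only [mul_assoc]
      _ = U * ((Matrix.diagonal hM.eigenvalues *
            Matrix.diagonal (fun i => (hM.eigenvalues i)⁻¹)) * star U) := by
          rw [hUU, one_mul, mul_assoc]
      _ = U * star U := by
          rw [Matrix.diagonal_mul_diagonal,
            show (fun i => hM.eigenvalues i * (hM.eigenvalues i)⁻¹) = fun _ => (1:ℝ) from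
              funext fun i => mul_inv_cancel₀ (ne_of_gt (hpos i)),
            Matrix.diagonal_one, one_mul]
      _ = 1 := hUU'
  rw [hid]
  apply conj_diag_norm_le hUU hUU' (le_of_lt (inv_pos.mpr ha))
  intro i
  rw [abs_of_pos (inv_pos.mpr (hpos i))]
  exact inv_anti₀ ha (hev i)

lemma RXR_norm_le {p : ℕ} {R Sinv X : Matrix (Fin p) (Fin p) ℝ} {β γ : ℝ}
    (hR : R.PosSemidef) (hRR : R * R = Sinv) (hSinv : ‖Sinv‖ ≤ β) (hX : ‖X‖ ≤ γ)
    (hγ : 0 ≤ γ) : ‖R * X * R‖ ≤ β * γ := by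
  have h2 : ‖R‖ * ‖R‖ = ‖Sinv‖ := by
    rw [← Matrix.l2_opNorm_conjTranspose_mul_self, hR.1, hRR]
  calc ‖R * X * R‖ ≤ ‖R * X‖ * ‖R‖ := Matrix.l2_opNorm_mul _ _
    _ ≤ (‖R‖ * ‖X‖) * ‖R‖ := by gcongr; exact Matrix.l2_opNorm_mul _ _
    _ = (‖R‖ * ‖R‖) * ‖X‖ := by ring
    _ ≤ β * γ := by
        rw [h2]
        exact mul_le_mul hSinv hX (norm_nonneg _) (le_trans (norm_nonneg _) hSinv)

end RescaledAux

open RescaledAux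

/-- change of variables and operator-norm bounds for the rescaled
third- and fourth-derivative arrays. -/
theorem rescaled_cubic_quartic_forms
    (η₁ η₂ η₃ η₄ η₅ η₆ c c₃ c₄ cinf : ℝ)
    (hη₁ : 0 < η₁) (h12 : η₁ ≤ η₂) (h34 : η₃ ≤ η₄) (h56 : η₅ ≤ η₆)
    (hc : 0 < c) (hcinf0 : 0 ≤ cinf) (hcinf : cinf ≤ 1 / 2) :
    ∃ C > 0, ∀ (n p : ℕ) (S R : Matrix (Fin p) (Fin p) ℝ)
      (G : Fin p → Matrix (Fin p) (Fin p) ℝ)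
      (H : Fin p → Fin p → Matrix (Fin p) (Fin p) ℝ),
      -- Σ symmetric positive definite with eigenvalues in [η₁ n, η₂ n]
      S.PosDef → eigsIn S (η₁ * n) (η₂ * n) →
      -- R = Σ^{−1/2}: the positive semidefinite square root of Σ⁻¹
      R.PosSemidef → R * R = S⁻¹ →
      maxRowSum R ≤ c * (p : ℝ) ^ cinf / (n : ℝ) ^ ((1 : ℝ) / 2) →
      -- eigenvalue bounds for G_l and H_{lm}
      (∀ l, eigsIn (G l) (η₃ * (n : ℝ) ^ c₃) (η₄ * (n : ℝ) ^ c₃)) →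
      (∀ l m, eigsIn (H l m) (η₅ * (n : ℝ) ^ c₄) (η₆ * (n : ℝ) ^ c₄)) →
      -- (i) change of variables θ = n^{1/2} Σ^{−1/2} θ̄
      (∀ θb : Fin p → ℝ,
        (∑ j, (Real.sqrt n • R.mulVec θb) j * qf (G j) (Real.sqrt n • R.mulVec θb)
          = ∑ j, θb j * qf (Amat n R G j) θb) ∧
        (∑ j, ∑ k, (Real.sqrt n • R.mulVec θb) j * (Real.sqrt n • R.mulVec θb) k *
              qf (H j k) (Real.sqrt n • R.mulVec θb)
          = ∑ j, ∑ k, θb j * θb k * qf (Bmat n R H j k) θb)) ∧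
      -- (ii) operator norm bounds
      (∀ j, opNorm (Amat n R G j) ≤ C * (p : ℝ) ^ cinf * (n : ℝ) ^ c₃) ∧
      (∀ j k, opNorm (Bmat n R H j k) ≤ C * (p : ℝ) ^ (2 * cinf) * (n : ℝ) ^ c₄) := by
  
  classical
  set K₃ : ℝ := max |η₃| |η₄| with hK₃
  set K₅ : ℝ := max |η₅| |η₆| with hK₅
  have hK₃0 : 0 ≤ K₃ := le_trans (abs_nonneg η₃) (le_max_left _ _)
  have hK₅0 : 0 ≤ K₅ := le_trans (abs_nonneg η₅) (le_max_left _ _)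
  set C : ℝ := c * K₃ / η₁ + c ^ 2 * K₅ / η₁ + 1 with hC
  have hC1 : c * K₃ / η₁ ≤ C := by
    have h1 : 0 ≤ c ^ 2 * K₅ / η₁ := by positivity
    simp only [hC]; linarith
  have hC2 : c ^ 2 * K₅ / η₁ ≤ C := by
    have h1 : 0 ≤ c * K₃ / η₁ := by positivity
    simp only [hC]; linarith
  have hCpos : 0 < C := by
    have h1 : 0 ≤ c * K₃ / η₁ := by positivity
    have h2 : 0 ≤ c ^ 2 * K₅ / η₁ := by positivity
    simp only [hC]; linarith
  refine ⟨C, hCpos, ?_⟩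
  intro n p S R G H hSpd hSe hR hRR hRow hG hH
  obtain ⟨hSh, hSev⟩ := hSe
  have hRt : Rᵀ = R := by
    ext i j
    have h := congrFun (congrFun hR.1 i) j
    rw [Matrix.conjTranspose_apply, star_trivial] at h
    rw [Matrix.transpose_apply, h]
  -- common facts, assuming an index exists
  have hnpos : Fin p → (0:ℝ) < n := by
    intro j
    rcases Nat.eq_zero_or_pos n with h0 | h0
    · exfalso
      have h1 : (0:ℝ) < hSh.eigenvalues j := hSpd.eigenvalues_pos j
      have h2 := (hSev j).2
      rw [h0] at h2
      push_cast at h2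
      nlinarith
    · exact_mod_cast h0
  have hcol : Fin p → ∀ j' : Fin p,
      (∑ l, |R l j'|) ≤ c * (p:ℝ) ^ cinf / (n:ℝ) ^ ((1:ℝ)/2) := by
    intro _ j'
    calc (∑ l, |R l j'|) = ∑ l, |R j' l| := by
          refine Finset.sum_congr rfl fun l _ => ?_
          have h := congrFun (congrFun hRt l) j'
          rw [Matrix.transpose_apply] at h
          rw [h]
      _ ≤ ⨆ j'', ∑ l, |R j'' l| :=
          le_ciSup (f := fun j'' => ∑ l, |R j'' l|) (Finite.bddAbove_range _) j'
      _ ≤ c * (p:ℝ) ^ cinf / (n:ℝ) ^ ((1:ℝ)/2) := hRow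
  have hcolnn : ∀ j' : Fin p, (0:ℝ) ≤ ∑ l, |R l j'| :=
    fun j' => Finset.sum_nonneg fun l _ => abs_nonneg _
  refine ⟨fun θb => ⟨partI_A hRt G θb, partI_B hRt H θb⟩, ?_, ?_⟩
  · -- A bound
    intro j
    have hn : (0:ℝ) < n := hnpos j
    have hp' : (0:ℝ) < p := by exact_mod_cast j.pos
    have hη₁n : (0:ℝ) < η₁ * n := by positivity
    have hSinv : ‖S⁻¹‖ ≤ (η₁ * ↑n)⁻¹ := inv_norm_le hSh hη₁n (fun i => (hSev i).1)
    have hncpos : (0:ℝ) ≤ (n:ℝ) ^ c₃ := Real.rpow_nonneg (le_of_lt hn) _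
    have hpc : (0:ℝ) ≤ (p:ℝ) ^ cinf := Real.rpow_nonneg (le_of_lt hp') _
    have hnhalf : (0:ℝ) < (n:ℝ) ^ ((1:ℝ)/2) := Real.rpow_pos_of_pos hn _
    have h₃ : -K₃ ≤ η₃ := by
      have h1 := neg_abs_le η₃
      have h2 := le_max_left |η₃| |η₄|
      simp only [hK₃]; linarith
    have h₄ : η₄ ≤ K₃ := le_trans (le_abs_self η₄) (le_max_right _ _)
    have hGn : ∀ l, ‖G l‖ ≤ K₃ * (n:ℝ) ^ c₃ := by
      intro l
      obtain ⟨hGh, hGev⟩ := hG l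
      refine herm_norm_le hGh (by positivity) fun i => abs_le.mpr ⟨?_, ?_⟩
      · calc -(K₃ * (n:ℝ) ^ c₃) = (-K₃) * (n:ℝ) ^ c₃ := by ring
          _ ≤ η₃ * (n:ℝ) ^ c₃ := mul_le_mul_of_nonneg_right h₃ hncpos
          _ ≤ _ := (hGev i).1
      · exact le_trans (hGev i).2 (mul_le_mul_of_nonneg_right h₄ hncpos)
    have hRXR : ∀ l, ‖R * G l * R‖ ≤ (η₁ * ↑n)⁻¹ * (K₃ * (n:ℝ) ^ c₃) :=
      fun l => RXR_norm_le hR hRR hSinv (hGn l) (by positivity)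
    have hA : opNorm (Amat n R G j) = ‖Amat n R G j‖ := rfl
    rw [hA]
    have h32 : (0:ℝ) ≤ (n:ℝ) ^ ((3:ℝ)/2) := Real.rpow_nonneg (le_of_lt hn) _
    calc ‖Amat n R G j‖
        = (n:ℝ) ^ ((3:ℝ)/2) * ‖∑ l, R l j • (R * G l * R)‖ := by
          rw [Amat, norm_smul, Real.norm_eq_abs, abs_of_nonneg h32]
      _ ≤ (n:ℝ) ^ ((3:ℝ)/2) * ∑ l, |R l j| * ‖R * G l * R‖ := by
          refine mul_le_mul_of_nonneg_left ?_ h32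
          refine le_trans (norm_sum_le _ _) (Finset.sum_le_sum fun l _ => ?_)
          rw [norm_smul, Real.norm_eq_abs]
      _ ≤ (n:ℝ) ^ ((3:ℝ)/2) * ∑ l, |R l j| * ((η₁ * ↑n)⁻¹ * (K₃ * (n:ℝ) ^ c₃)) := by
          refine mul_le_mul_of_nonneg_left (Finset.sum_le_sum fun l _ => ?_) h32
          exact mul_le_mul_of_nonneg_left (hRXR l) (abs_nonneg _)
      _ = (n:ℝ) ^ ((3:ℝ)/2) * ((∑ l, |R l j|) * ((η₁ * ↑n)⁻¹ * (K₃ * (n:ℝ) ^ c₃))) := by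
          rw [Finset.sum_mul]
      _ ≤ (n:ℝ) ^ ((3:ℝ)/2) * ((c * (p:ℝ) ^ cinf / (n:ℝ) ^ ((1:ℝ)/2)) *
            ((η₁ * ↑n)⁻¹ * (K₃ * (n:ℝ) ^ c₃))) := by
          refine mul_le_mul_of_nonneg_left ?_ h32
          exact mul_le_mul_of_nonneg_right (hcol j j) (by positivity)
      _ = (c * K₃ / η₁) * (p:ℝ) ^ cinf * (n:ℝ) ^ c₃ := by
          have e1 : (n:ℝ) ^ ((3:ℝ)/2) = (n:ℝ) ^ ((1:ℝ)/2) * n := by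
            rw [show (3:ℝ)/2 = 1/2 + 1 by norm_num, Real.rpow_add hn, Real.rpow_one]
          rw [e1]
          have h1 : (n:ℝ) ^ ((1:ℝ)/2) ≠ 0 := ne_of_gt hnhalf
          have h2 : (n:ℝ) ≠ 0 := ne_of_gt hn
          have h3 : η₁ ≠ 0 := ne_of_gt hη₁
          field_simp
      _ ≤ C * (p:ℝ) ^ cinf * (n:ℝ) ^ c₃ :=
          mul_le_mul_of_nonneg_right (mul_le_mul_of_nonneg_right hC1 hpc) hncpos
  · -- B bound
    intro j k
    have hn : (0:ℝ) < n := hnpos j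
    have hp' : (0:ℝ) < p := by exact_mod_cast j.pos
    have hη₁n : (0:ℝ) < η₁ * n := by positivity
    have hSinv : ‖S⁻¹‖ ≤ (η₁ * ↑n)⁻¹ := inv_norm_le hSh hη₁n (fun i => (hSev i).1)
    have hncpos' : (0:ℝ) ≤ (n:ℝ) ^ c₄ := Real.rpow_nonneg (le_of_lt hn) _
    have hnhalf : (0:ℝ) < (n:ℝ) ^ ((1:ℝ)/2) := Real.rpow_pos_of_pos hn _
    have h₅ : -K₅ ≤ η₅ := by
      have h1 := neg_abs_le η₅
      have h2 := le_max_left |η₅| |η₆|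
      simp only [hK₅]; linarith
    have h₆ : η₆ ≤ K₅ := le_trans (le_abs_self η₆) (le_max_right _ _)
    have hHn : ∀ l m, ‖H l m‖ ≤ K₅ * (n:ℝ) ^ c₄ := by
      intro l m
      obtain ⟨hHh, hHev⟩ := hH l m
      refine herm_norm_le hHh (by positivity) fun i => abs_le.mpr ⟨?_, ?_⟩
      · calc -(K₅ * (n:ℝ) ^ c₄) = (-K₅) * (n:ℝ) ^ c₄ := by ring
          _ ≤ η₅ * (n:ℝ) ^ c₄ := mul_le_mul_of_nonneg_right h₅ hncpos'
          _ ≤ _ := (hHev i).1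
      · exact le_trans (hHev i).2 (mul_le_mul_of_nonneg_right h₆ hncpos')
    have hRXR : ∀ l m, ‖R * H l m * R‖ ≤ (η₁ * ↑n)⁻¹ * (K₅ * (n:ℝ) ^ c₄) :=
      fun l m => RXR_norm_le hR hRR hSinv (hHn l m) (by positivity)
    have hB : opNorm (Bmat n R H j k) = ‖Bmat n R H j k‖ := rfl
    rw [hB]
    have hn2 : (0:ℝ) ≤ (n:ℝ) ^ 2 := by positivity
    set β : ℝ := (η₁ * ↑n)⁻¹ * (K₅ * (n:ℝ) ^ c₄) with hβ
    have hβ0 : 0 ≤ β := by positivity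
    calc ‖Bmat n R H j k‖
        = (n:ℝ) ^ 2 * ‖∑ l, ∑ m, (R l j * R m k) • (R * H l m * R)‖ := by
          rw [Bmat, norm_smul, Real.norm_eq_abs, abs_of_nonneg hn2]
      _ ≤ (n:ℝ) ^ 2 * ∑ l, ∑ m, |R l j| * |R m k| * ‖R * H l m * R‖ := by
          refine mul_le_mul_of_nonneg_left ?_ hn2
          refine le_trans (norm_sum_le _ _) (Finset.sum_le_sum fun l _ => ?_)
          refine le_trans (norm_sum_le _ _) (Finset.sum_le_sum fun m _ => ?_)
          rw [norm_smul, Real.norm_eq_abs, abs_mul]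
      _ ≤ (n:ℝ) ^ 2 * ∑ l, ∑ m, |R l j| * |R m k| * β := by
          refine mul_le_mul_of_nonneg_left (Finset.sum_le_sum fun l _ =>
            Finset.sum_le_sum fun m _ => ?_) hn2
          exact mul_le_mul_of_nonneg_left (hRXR l m) (by positivity)
      _ = (n:ℝ) ^ 2 * ((∑ l, |R l j|) * ((∑ m, |R m k|) * β)) := by
          congr 1
          rw [Finset.sum_mul]
          refine Finset.sum_congr rfl fun l _ => ?_
          rw [Finset.sum_mul, Finset.mul_sum]
          exact Finset.sum_congr rfl fun m _ => by ring
      _ ≤ (n:ℝ) ^ 2 * ((c * (p:ℝ) ^ cinf / (n:ℝ) ^ ((1:ℝ)/2)) *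
            ((c * (p:ℝ) ^ cinf / (n:ℝ) ^ ((1:ℝ)/2)) * β)) := by
          refine mul_le_mul_of_nonneg_left ?_ hn2
          exact mul_le_mul (hcol j j)
            (mul_le_mul_of_nonneg_right (hcol j k) hβ0)
            (mul_nonneg (hcolnn k) hβ0) (by positivity)
      _ = (c ^ 2 * K₅ / η₁) * ((p:ℝ) ^ cinf * (p:ℝ) ^ cinf) * (n:ℝ) ^ c₄ := by
          have e1 : (n:ℝ) ^ 2 = ((n:ℝ) ^ ((1:ℝ)/2) * (n:ℝ) ^ ((1:ℝ)/2)) * n := by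
            rw [← Real.rpow_add hn, show (1:ℝ)/2 + 1/2 = 1 by norm_num, Real.rpow_one, sq]
          rw [hβ, e1]
          have h1 : (n:ℝ) ^ ((1:ℝ)/2) ≠ 0 := ne_of_gt hnhalf
          have h2 : (n:ℝ) ≠ 0 := ne_of_gt hn
          have h3 : η₁ ≠ 0 := ne_of_gt hη₁
          field_simp
      _ = (c ^ 2 * K₅ / η₁) * (p:ℝ) ^ (2 * cinf) * (n:ℝ) ^ c₄ := by
          rw [two_mul, Real.rpow_add hp']
      _ ≤ C * (p:ℝ) ^ (2 * cinf) * (n:ℝ) ^ c₄ :=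
          mul_le_mul_of_nonneg_right
            (mul_le_mul_of_nonneg_right hC2 (Real.rpow_nonneg (le_of_lt hp') _))
            hncpos'
end
end

section
/- Suppose p(n) ≤ A n^α with α < 1/2 − 1/(2ζ−2), and that for all indices j₁,…,j_{ζ−2} ≤ p and all θ⋆ with ‖θ⋆−θ̂_n‖₂ ≤ √2 γ_n, the symmetric p×p matrix with (j,k) entry ∂^ζ g_n/∂θ_j∂θ_k∂θ_{j₁}⋯∂θ_{j_{ζ−2}}(θ⋆) has all eigenvalues in [B_ζ n, C_ζ n]. Then there exist constants C > 0 and N ∈ ℕ, depending only on ζ, B_ζ, C_ζ, A, α, such that for all n ≥ N, all θ ∈ ℝ^p with ‖θ‖₂ ≤ √2 γ_n, and all θ̃ on the segment joining θ̂_n and θ̂_n + θ: |exp(R_ζ(θ, θ̃)) − 1| ≤ C p^{ζ−1} log^{ζ/2}(n) / n^{(ζ−2)/2}, and in particular |R_ζ(θ, θ̃)| ≤ C p^{ζ−1} log^{ζ/2}(n) / n^{(ζ−2)/2}. -/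
open MeasureTheory Real Filter Matrix

noncomputable section

/-- Replace the first two entries of an index tuple by `a` and `b`. -/
def setFront {m p : ℕ} (a b : Fin p) (w : Fin m → Fin p) : Fin m → Fin p :=
  fun i => if (i : ℕ) = 0 then a else if (i : ℕ) = 1 then b else w i

/-- The `ζ`-th order Taylor remainder term
`R_ζ(θ, θ⋆) = (1/ζ!) Σ_{k₁,…,k_ζ} θ_{k₁} ⋯ θ_{k_ζ} ∂^ζ g/∂θ_{k₁}⋯∂θ_{k_ζ}(θ⋆)`. -/
def Rrem {p : ℕ} (ζ : ℕ) (g : E p → ℝ) (θ θs : E p) : ℝ :=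
  (1 / (Nat.factorial ζ : ℝ)) * ∑ v : Fin ζ → Fin p, (∏ i, θ (v i)) * pd ζ g θs v

-- auxiliary lemmas
lemma quad_form_bound {p : ℕ} {M : Matrix (Fin p) (Fin p) ℝ} {a b : ℝ}
    (h : eigsIn M a b) (x : Fin p → ℝ) :
    |x ⬝ᵥ M *ᵥ x| ≤ max |a| |b| * ∑ i, x i ^ 2 := by
  obtain ⟨hM, hev⟩ := h
  set U : Matrix (Fin p) (Fin p) ℝ := (hM.eigenvectorUnitary : Matrix (Fin p) (Fin p) ℝ) with hU
  set y : Fin p → ℝ := x ᵥ* U with hy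
  have hstar : star U = Uᵀ := by
    rw [Matrix.star_eq_conjTranspose, conjTranspose_eq_transpose_of_trivial]
  have hyx : ∑ i, y i ^ 2 = ∑ i, x i ^ 2 := by
    have h1 : y ⬝ᵥ y = x ⬝ᵥ x := by
      have : y ⬝ᵥ y = x ⬝ᵥ (U * star U) *ᵥ x := by
        rw [← mulVec_mulVec, dotProduct_mulVec, hy]
        congr 1
        rw [hstar, mulVec_transpose]
      rw [this, (Matrix.mem_unitaryGroup_iff).mp (hM.eigenvectorUnitary).2, one_mulVec]
    simpa [dotProduct, pow_two] using h1
  have hq : x ⬝ᵥ M *ᵥ x = ∑ i, hM.eigenvalues i * y i ^ 2 := by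
    conv_lhs => rw [hM.spectral_theorem, Unitary.conjStarAlgAut_apply]
    rw [← mulVec_mulVec, ← mulVec_mulVec, dotProduct_mulVec]
    have hsy : (star U) *ᵥ x = y := by
      rw [hstar, mulVec_transpose, hy]
    rw [hsy]
    show y ⬝ᵥ _ *ᵥ y = _
    rw [dotProduct]
    refine Finset.sum_congr rfl fun i _ => ?_
    rw [mulVec_diagonal]
    show y i * (hM.eigenvalues i * y i) = _
    ring
  rw [hq]
  have hb : |∑ i, hM.eigenvalues i * y i ^ 2| ≤ ∑ i, max |a| |b| * y i ^ 2 := by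
    refine (Finset.abs_sum_le_sum_abs _ _).trans (Finset.sum_le_sum fun i _ => ?_)
    rw [abs_mul, abs_of_nonneg (sq_nonneg (y i))]
    have h1 := (hev i).1; have h2 := (hev i).2
    have : |hM.eigenvalues i| ≤ max |a| |b| := by
      rcases abs_cases (hM.eigenvalues i) with ⟨he, _⟩ | ⟨he, _⟩ <;> rw [he]
      · exact le_trans h2 (le_trans (le_abs_self b) (le_max_right _ _))
      · exact le_trans (neg_le_neg h1) (le_trans (neg_le_abs a) (le_max_left _ _))
    exact mul_le_mul_of_nonneg_right this (sq_nonneg _)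
  calc _ ≤ ∑ i, max |a| |b| * y i ^ 2 := hb
    _ = max |a| |b| * ∑ i, x i ^ 2 := by rw [← Finset.mul_sum, hyx]

lemma hsq_pow (x : ℝ) (hx : 0 ≤ x) (k : ℕ) : (x ^ ((k:ℝ)/2))^2 = x ^ k := by
  rw [← Real.rpow_natCast (x ^ ((k:ℝ)/2)) 2, ← Real.rpow_mul hx, ← Real.rpow_natCast x k]
  norm_num

lemma sum_cons_decomp {p m : ℕ} (G : (Fin (m+2) → Fin p) → ℝ) :
    ∑ v : Fin (m+2) → Fin p, G v
      = ∑ t : Fin m → Fin p, ∑ a : Fin p, ∑ b : Fin p, G (Fin.cons a (Fin.cons b t)) := by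
  have h1 : ∀ (k : ℕ) (H : (Fin (k+1) → Fin p) → ℝ),
      ∑ v : Fin (k+1) → Fin p, H v = ∑ a : Fin p, ∑ u : Fin k → Fin p, H (Fin.cons a u) := by
    intro k H
    rw [← Equiv.sum_comp (Fin.consEquiv fun _ => Fin p) H, Fintype.sum_prod_type]
    rfl
  rw [h1 (m+1) G]
  rw [show (∑ a : Fin p, ∑ u : Fin (m+1) → Fin p, G (Fin.cons a u))
      = ∑ a : Fin p, ∑ b : Fin p, ∑ t : Fin m → Fin p, G (Fin.cons a (Fin.cons b t)) from
    Finset.sum_congr rfl fun a _ => h1 m fun u => G (Fin.cons a u)]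
  rw [show (∑ a : Fin p, ∑ b : Fin p, ∑ t : Fin m → Fin p, G (Fin.cons a (Fin.cons b t)))
      = ∑ a : Fin p, ∑ t : Fin m → Fin p, ∑ b : Fin p, G (Fin.cons a (Fin.cons b t)) from
    Finset.sum_congr rfl fun a _ => Finset.sum_comm]
  exact Finset.sum_comm

lemma prod_cons2 {p m : ℕ} (θ : Fin p → ℝ) (a b : Fin p) (t : Fin m → Fin p) :
    ∏ i : Fin (m+2), θ ((Fin.cons a (Fin.cons b t) : Fin (m+2) → Fin p) i)
      = θ a * (θ b * ∏ i, θ (t i)) := by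
  rw [Fin.prod_univ_succ, Fin.prod_univ_succ]
  simp [Fin.cons_succ, Fin.cons_zero]

lemma setFront_cons {p m : ℕ} (j k a b : Fin p) (t : Fin m → Fin p) :
    setFront j k (Fin.cons a (Fin.cons b t)) = Fin.cons j (Fin.cons k t) := by
  funext i
  refine Fin.cases ?_ (fun i => ?_) i
  · simp [setFront]
  · refine Fin.cases ?_ (fun i' => ?_) i
    · simp [setFront]
    · simp [setFront, Fin.val_succ, Fin.cons_succ]

/-- size of the `ζ`-th order Taylor remainder. -/
theorem taylor_remainder_bound
    (ζ : ℕ) (hζ : 4 < ζ) (Bz Cz A α : ℝ) (hBC : Bz ≤ Cz) (hA : 0 < A) (hα0 : 0 < α)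
    (hα : α < 1 / 2 - 1 / (2 * (ζ : ℝ) - 2)) :
    ∃ C > 0, ∃ N : ℕ,
      ∀ (p : ℕ → ℕ) (g : (n : ℕ) → E (p n) → ℝ) (θhat : (n : ℕ) → E (p n)),
        (∀ n, (p n : ℝ) ≤ A * (n : ℝ) ^ α) →
        (∀ n, ContDiff ℝ ζ (g n)) →
        -- eigenvalue bounds on all ζ-th order derivative sub-matrices near θ̂_n
        (∀ n, ∀ w : Fin ζ → Fin (p n), ∀ θs : E (p n),
          ‖θs - θhat n‖ ≤ Real.sqrt 2 * gam (p n) n →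
          eigsIn (Matrix.of fun j k => pd ζ (g n) θs (setFront j k w))
            (Bz * n) (Cz * n)) →
        ∀ n ≥ N, ∀ θ : E (p n), ‖θ‖ ≤ Real.sqrt 2 * gam (p n) n →
          ∀ θtil ∈ segment ℝ (θhat n) (θhat n + θ),
            |Real.exp (Rrem ζ (g n) θ θtil) - 1|
                ≤ C * (p n : ℝ) ^ (ζ - 1) * Real.log n ^ ((ζ : ℝ) / 2) /
                    (n : ℝ) ^ (((ζ : ℝ) - 2) / 2) ∧
            |Rrem ζ (g n) θ θtil|
                ≤ C * (p n : ℝ) ^ (ζ - 1) * Real.log n ^ ((ζ : ℝ) / 2) /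
                    (n : ℝ) ^ (((ζ : ℝ) - 2) / 2) := by
  obtain ⟨m, rfl⟩ : ∃ m, ζ = m + 2 := ⟨ζ - 2, by omega⟩
  set K := max |Bz| |Cz| with hK
  have hK0 : 0 ≤ K := le_trans (abs_nonneg _) (le_max_left _ _)
  set c₀ : ℝ := K * Real.sqrt 2 ^ (m+2) with hc₀
  have hc₀0 : 0 ≤ c₀ := by positivity
  refine ⟨2*c₀ + 1, by positivity, ?_⟩
  -- the exponent gap
  have hβ : 0 < (m:ℝ)/2 - α*((m:ℝ)+1) := by
    have hden : (0:ℝ) < 2*((m:ℝ)+2)-2 := by have := Nat.cast_nonneg (α := ℝ) m; linarith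
    have h1 : (1/(2*(((m+2:ℕ)):ℝ)-2)) * (2*(((m+2:ℕ)):ℝ)-2) = 1 := by
      push_cast
      field_simp
      exact div_self (ne_of_gt (by linarith))
    push_cast at hα h1 ⊢
    nlinarith [mul_lt_mul_of_pos_right hα hden]
  -- choose N
  have htend : Tendsto
      (fun n : ℕ => c₀ * A^(m+1) *
        (Real.log n ^ ((((m+2:ℕ)):ℝ)/2) / (n:ℝ) ^ ((m:ℝ)/2 - α*((m:ℝ)+1))))
      atTop (nhds 0) := by
    have h1 := (isLittleO_log_rpow_rpow_atTop ((((m+2:ℕ)):ℝ)/2) hβ).tendsto_div_nhds_zero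
    have h2 : Tendsto (fun n : ℕ =>
        Real.log n ^ ((((m+2:ℕ)):ℝ)/2) / (n:ℝ) ^ ((m:ℝ)/2 - α*((m:ℝ)+1)))
        atTop (nhds 0) := h1.comp tendsto_natCast_atTop_atTop
    simpa using h2.const_mul (c₀ * A^(m+1))
  have hev : ∀ᶠ n : ℕ in atTop,
      c₀ * A^(m+1) * (Real.log n ^ ((((m+2:ℕ)):ℝ)/2) / (n:ℝ) ^ ((m:ℝ)/2 - α*((m:ℝ)+1))) < 1 :=
    htend.eventually_lt_const one_pos
  obtain ⟨N, hN⟩ := (hev.and (eventually_ge_atTop 3)).exists_forall_of_atTop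
  refine ⟨N, ?_⟩
  intro p g θhat hp hg heig n hn θ hθ θtil hseg
  have hn3 : 3 ≤ n := (hN n hn).2
  have hn0 : (0:ℝ) < n := by
    have : (3:ℝ) ≤ n := by exact_mod_cast hn3
    linarith
  have hL0 : 0 ≤ Real.log n := Real.log_nonneg (by
    have : (3:ℝ) ≤ n := by exact_mod_cast hn3
    linarith)
  have hdist : ‖θtil - θhat n‖ ≤ Real.sqrt 2 * gam (p n) n := by
    obtain ⟨u, v, hu, hv, huv, huvθ⟩ := hseg
    have h1 : θtil - θhat n = v • θ := by
      rw [← huvθ, smul_add, ← add_assoc, ← add_smul, huv, one_smul]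
      abel
    rw [h1, norm_smul, Real.norm_eq_abs, abs_of_nonneg hv]
    have hv1 : v ≤ 1 := by linarith
    calc v * ‖θ‖ ≤ 1 * ‖θ‖ := mul_le_mul_of_nonneg_right hv1 (norm_nonneg θ)
      _ = ‖θ‖ := one_mul _
      _ ≤ _ := hθ
  -- notation
  set L := Real.log n with hLdef
  set e : ℝ := (((m+2:ℕ)):ℝ)/2 with hedef
  set X : ℝ := (p n : ℝ)^(m+1) * L ^ e / (n:ℝ)^((m:ℝ)/2) with hXdef
  have hX0 : 0 ≤ X := by positivity
  -- the target RHS equals (2c₀+1) * X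
  have htgt : (2*c₀+1) * (p n : ℝ) ^ (m+2-1) * L ^ (((m+2:ℕ):ℝ)/2) /
      (n:ℝ) ^ (((((m+2:ℕ)):ℝ) - 2)/2) = (2*c₀+1) * X := by
    have h1 : ((m+2:ℕ):ℝ) - 2 = (m:ℝ) := by push_cast; ring
    have h2 : (m+2-1 : ℕ) = m+1 := rfl
    rw [h1, h2, hXdef, hedef]
    ring
  -- main bound : |R| ≤ c₀ * X
  have key : |Rrem (m+2) (g n) θ θtil| ≤ c₀ * X := by
    rcases Nat.eq_zero_or_pos (p n) with hP | hP
    · have hFempty : IsEmpty (Fin (p n)) := by rw [hP]; infer_instance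
      have hVempty : IsEmpty (Fin (m+2) → Fin (p n)) :=
        ⟨fun f => hFempty.false (f 0)⟩
      have hzero : Rrem (m+2) (g n) θ θtil = 0 := by
        rw [Rrem, Finset.univ_eq_empty, Finset.sum_empty, mul_zero]
      rw [hzero, abs_zero]
      positivity
    · set c : Fin (p n) := ⟨0, hP⟩ with hc
      set S : ℝ := ∑ i, (θ i)^2 with hS
      have hS0 : 0 ≤ S := by positivity
      set s : ℝ := ∑ i, |θ i| with hs
      have hs0 : 0 ≤ s := by positivity
      -- quadratic form bound for each tail t
      have hqf : ∀ t : Fin m → Fin (p n),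
          |∑ a, ∑ b, θ a * (θ b * pd (m+2) (g n) θtil
              ((Fin.cons a (Fin.cons b t) : Fin (m+2) → Fin (p n))))| ≤ K * n * S := by
        intro t
        have he := heig n (Fin.cons c (Fin.cons c t)) θtil hdist
        have hqd := quad_form_bound he (fun i => θ i)
        have hm : (fun i => θ i) ⬝ᵥ
            (Matrix.of fun j k => pd (m+2) (g n) θtil
              (setFront j k (Fin.cons c (Fin.cons c t)))) *ᵥ (fun i => θ i)
            = ∑ a, ∑ b, θ a * (θ b * pd (m+2) (g n) θtil
              ((Fin.cons a (Fin.cons b t) : Fin (m+2) → Fin (p n)))) := by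
          show (∑ a, θ a * ∑ b, (Matrix.of fun j k => pd (m+2) (g n) θtil
              (setFront j k (Fin.cons c (Fin.cons c t)))) a b * θ b) = _
          simp only [Matrix.of_apply, setFront_cons]
          refine Finset.sum_congr rfl fun a _ => ?_
          rw [Finset.mul_sum]
          exact Finset.sum_congr rfl fun b _ => by ring
        rw [hm] at hqd
        have hmax : max |Bz * (n:ℝ)| |Cz * (n:ℝ)| = K * n := by
          rw [abs_mul, abs_mul, Nat.abs_cast, hK, max_mul_of_nonneg _ _ (Nat.cast_nonneg n)]
        rw [hmax] at hqd
        exact hqd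
      -- bound on the big sum
      have hTb : |∑ v : Fin (m+2) → Fin (p n), (∏ i, θ (v i)) * pd (m+2) (g n) θtil v|
          ≤ s^m * (K * n * S) := by
        rw [sum_cons_decomp]
        have hinner : ∀ t : Fin m → Fin (p n),
            (∑ a, ∑ b, (∏ i, θ ((Fin.cons a (Fin.cons b t) : Fin (m+2) → Fin (p n)) i)) *
                pd (m+2) (g n) θtil ((Fin.cons a (Fin.cons b t) : Fin (m+2) → Fin (p n))))
            = (∏ i, θ (t i)) * ∑ a, ∑ b, θ a * (θ b * pd (m+2) (g n) θtil
                ((Fin.cons a (Fin.cons b t) : Fin (m+2) → Fin (p n)))) := by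
          intro t
          rw [Finset.mul_sum]
          refine Finset.sum_congr rfl fun a _ => ?_
          rw [Finset.mul_sum]
          refine Finset.sum_congr rfl fun b _ => ?_
          rw [prod_cons2]
          ring
        calc |∑ t : Fin m → Fin (p n), ∑ a, ∑ b,
                (∏ i, θ ((Fin.cons a (Fin.cons b t) : Fin (m+2) → Fin (p n)) i)) *
                pd (m+2) (g n) θtil ((Fin.cons a (Fin.cons b t) : Fin (m+2) → Fin (p n)))|
            ≤ ∑ t : Fin m → Fin (p n), |∑ a, ∑ b,
                (∏ i, θ ((Fin.cons a (Fin.cons b t) : Fin (m+2) → Fin (p n)) i)) *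
                pd (m+2) (g n) θtil ((Fin.cons a (Fin.cons b t) : Fin (m+2) → Fin (p n)))| :=
              Finset.abs_sum_le_sum_abs _ _
          _ ≤ ∑ t : Fin m → Fin (p n), (∏ i, |θ (t i)|) * (K * n * S) := by
              refine Finset.sum_le_sum fun t _ => ?_
              rw [hinner t, abs_mul, Finset.abs_prod]
              exact mul_le_mul_of_nonneg_left (hqf t)
                (Finset.prod_nonneg fun i _ => abs_nonneg _)
          _ = (∑ t : Fin m → Fin (p n), ∏ i, |θ (t i)|) * (K * n * S) := by
              rw [Finset.sum_mul]
          _ = s^m * (K * n * S) := by rw [hs, Fintype.sum_pow]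
      -- from the sum to Rrem
      have hRb : |Rrem (m+2) (g n) θ θtil| ≤ s^m * (K * n * S) := by
        rw [Rrem, abs_mul]
        have h1 : |1 / ((m+2).factorial : ℝ)| ≤ 1 := by
          rw [abs_of_nonneg (by positivity)]
          rw [div_le_one (by positivity : (0:ℝ) < ((m+2).factorial : ℝ))]
          exact_mod_cast (m+2).factorial_pos
        calc |1 / ((m+2).factorial : ℝ)| * |∑ v : Fin (m+2) → Fin (p n),
                (∏ i, θ (v i)) * pd (m+2) (g n) θtil v|
            ≤ 1 * (s^m * (K * n * S)) :=
              mul_le_mul h1 hTb (abs_nonneg _) zero_le_one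
          _ = s^m * (K * n * S) := one_mul _
      -- Cauchy–Schwarz etc.
      have hnormS : ‖θ‖ = Real.sqrt S := by
        rw [EuclideanSpace.norm_eq, hS]
        congr 1
        exact Finset.sum_congr rfl fun i _ => by rw [Real.norm_eq_abs, sq_abs]
      have hSnorm : S = ‖θ‖^2 := by rw [hnormS, Real.sq_sqrt hS0]
      have hsle : s ≤ Real.sqrt (p n) * ‖θ‖ := by
        have h1 : s^2 ≤ (p n : ℝ) * S := by
          have h2 := Finset.sum_mul_sq_le_sq_mul_sq Finset.univ
            (fun _ : Fin (p n) => (1:ℝ)) (fun i => |θ i|)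
          simpa [hS, hs, sq_abs, Finset.card_univ] using h2
        calc s = Real.sqrt (s^2) := (Real.sqrt_sq hs0).symm
          _ ≤ Real.sqrt ((p n : ℝ) * S) := Real.sqrt_le_sqrt h1
          _ = Real.sqrt (p n) * ‖θ‖ := by
              rw [Real.sqrt_mul (Nat.cast_nonneg _), hnormS]
      -- chain
      have hW : |Rrem (m+2) (g n) θ θtil|
          ≤ K * n * Real.sqrt (p n) ^ m * (Real.sqrt 2 * gam (p n) n)^(m+2) := by
        refine hRb.trans ?_
        have h1 : s^m * (K * n * S) ≤ (Real.sqrt (p n) * ‖θ‖)^m * (K * n * ‖θ‖^2) := by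
          rw [hSnorm]
          exact mul_le_mul_of_nonneg_right (pow_le_pow_left₀ hs0 hsle m) (by positivity)
        refine h1.trans ?_
        have h2 : (Real.sqrt (p n) * ‖θ‖)^m * (K * n * ‖θ‖^2)
            = K * n * Real.sqrt (p n) ^ m * ‖θ‖^(m+2) := by
          rw [mul_pow, pow_add]
          ring
        rw [h2]
        exact mul_le_mul_of_nonneg_left
          (pow_le_pow_left₀ (norm_nonneg θ) hθ (m+2)) (by positivity)
      -- the closed form
      have hgam : gam (p n) n = Real.sqrt ((p n : ℝ) * L / n) := rfl
      have hPL0 : (0:ℝ) ≤ (p n : ℝ) * L / n := by positivity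
      have hClosed : K * (n:ℝ) * Real.sqrt (p n) ^ m * (Real.sqrt 2 * gam (p n) n)^(m+2)
          = c₀ * X := by
        have hlhs0 : 0 ≤ K * (n:ℝ) * Real.sqrt (p n) ^ m *
            (Real.sqrt 2 * gam (p n) n)^(m+2) := by
          rw [hgam]; positivity
        have hrhs0 : 0 ≤ c₀ * X := by positivity
        rw [← Real.sqrt_sq hlhs0, ← Real.sqrt_sq hrhs0]
        congr 1
        have E1 : ((Real.sqrt (p n))^m)^2 = (p n:ℝ)^m := by
          rw [pow_right_comm, Real.sq_sqrt (Nat.cast_nonneg _)]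
        have E2 : ((Real.sqrt 2 * Real.sqrt ((p n:ℝ)*L/(n:ℝ)))^(m+2))^2
            = 2^(m+2) * (((p n:ℝ)*L)^(m+2)/(n:ℝ)^(m+2)) := by
          rw [mul_pow, mul_pow, pow_right_comm (Real.sqrt 2),
            pow_right_comm (Real.sqrt ((p n:ℝ)*L/(n:ℝ))),
            Real.sq_sqrt (by norm_num : (0:ℝ) ≤ 2), Real.sq_sqrt hPL0, div_pow]
        have E3 : ((Real.sqrt 2)^(m+2))^2 = 2^(m+2) := by
          rw [pow_right_comm, Real.sq_sqrt (by norm_num : (0:ℝ) ≤ 2)]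
        have E4 : (L ^ ((((m+2:ℕ)):ℝ)/2))^2 = L^(m+2) := hsq_pow L hL0 (m+2)
        have E5 : ((n:ℝ) ^ ((m:ℝ)/2))^2 = (n:ℝ)^m := hsq_pow _ hn0.le m
        have ER : (c₀ * X)^2
            = K^2 * 2^(m+2) * (((p n:ℝ))^(m+1))^2 * L^(m+2) / ((n:ℝ)^m) := by
          rw [hc₀, hXdef, hedef, mul_pow, mul_pow, E3, div_pow, mul_pow, E4, E5]
          ring
        rw [hgam, ER, mul_pow, mul_pow, E1, E2]
        have hn' : ((n:ℝ))^m ≠ 0 := by positivity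
        have hn2 : ((n:ℝ))^(m+2) ≠ 0 := by positivity
        field_simp
        ring
      rw [← hClosed]
      exact hW
  -- smallness : c₀ * X < 1
  have hsmall : c₀ * X < 1 := by
    have hpow : (p n:ℝ)^(m+1) ≤ A^(m+1) * (n:ℝ)^(α*((m:ℝ)+1)) := by
      calc (p n:ℝ)^(m+1) ≤ (A * (n:ℝ)^α)^(m+1) :=
            pow_le_pow_left₀ (Nat.cast_nonneg _) (hp n) _
        _ = A^(m+1) * ((n:ℝ)^α)^(m+1) := mul_pow _ _ _
        _ = A^(m+1) * (n:ℝ)^(α*((m:ℝ)+1)) := by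
            rw [← Real.rpow_natCast ((n:ℝ)^α) (m+1), ← Real.rpow_mul hn0.le]
            push_cast
            ring_nf
    have h1 : c₀ * X ≤ c₀ * (A^(m+1) * (n:ℝ)^(α*((m:ℝ)+1)) * L ^ e / (n:ℝ)^((m:ℝ)/2)) := by
      rw [hXdef]
      have := mul_le_mul_of_nonneg_right hpow
        (by positivity : (0:ℝ) ≤ L ^ e / (n:ℝ)^((m:ℝ)/2))
      calc c₀ * ((p n:ℝ)^(m+1) * L ^ e / (n:ℝ)^((m:ℝ)/2))
          = c₀ * ((p n:ℝ)^(m+1) * (L ^ e / (n:ℝ)^((m:ℝ)/2))) := by ring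
        _ ≤ c₀ * (A^(m+1) * (n:ℝ)^(α*((m:ℝ)+1)) * (L ^ e / (n:ℝ)^((m:ℝ)/2))) :=
            mul_le_mul_of_nonneg_left this hc₀0
        _ = c₀ * (A^(m+1) * (n:ℝ)^(α*((m:ℝ)+1)) * L ^ e / (n:ℝ)^((m:ℝ)/2)) := by ring
    have h2 : c₀ * (A^(m+1) * (n:ℝ)^(α*((m:ℝ)+1)) * L ^ e / (n:ℝ)^((m:ℝ)/2))
        = c₀ * A^(m+1) * (L ^ e / (n:ℝ)^((m:ℝ)/2 - α*((m:ℝ)+1))) := by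
      rw [Real.rpow_sub hn0]
      field_simp
    rw [h2] at h1
    exact lt_of_le_of_lt h1 (hN n hn).1
  -- conclusion
  rw [htgt]
  have hR1 : |Rrem (m+2) (g n) θ θtil| ≤ 1 := key.trans hsmall.le
  have hfin : 2 * (c₀ * X) ≤ (2*c₀+1) * X := by
    have hXe : (2*c₀+1) * X = 2*(c₀*X) + X := by ring
    rw [hXe]
    linarith
  constructor
  · refine (Real.abs_exp_sub_one_le hR1).trans ?_
    refine le_trans ?_ hfin
    linarith
  · exact key.trans (by linarith [mul_nonneg hc₀0 hX0])
end
end
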